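/- Let p be an odd prime, P a finite p-group, and A a subgroup of Aut(P). Let Ω(P) denote the subgroup of P generated by the elements of order dividing p, and suppose A stabilizes a subgroup series 1 = S_0 ≤ S_1 ≤ ... ≤ S_{n−1} ≤ S_n = Ω(P) (each S_i is A-invariant). If B is a subgroup of A such that [S_{i+1}, B] ≤ S_i for i = 0, 1, ..., n−1 (i.e. β(x)·x^{−1} ∈ S_i for all x ∈ S_{i+1} and all β ∈ B), then B is contained in a normal p-subgroup of A (i.e. B ≤ O_p(A)). -/

import Mathlib

open Subgroup
open scoped Pointwise
open scoped commutatorElement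

section Comm
variable {G : Type*} [Group G]

private lemma comm_aux1 (a b y : G) : ⁅a * b, y⁆ = a * ⁅b, y⁆ * a⁻¹ * ⁅a, y⁆ := by
  simp only [commutatorElement_def]; group

private lemma comm_aux2 (x a b : G) : ⁅x, a * b⁆ = ⁅x, a⁆ * (a * ⁅x, b⁆ * a⁻¹) := by
  simp only [commutatorElement_def]; group

private lemma comm_inv (x y : G) : ⁅x⁻¹, y⁆ = x⁻¹ * ⁅x, y⁆⁻¹ * x := by
  simp only [commutatorElement_def]; group

private lemma cent_conj {z : G} (hz : z ∈ Subgroup.center G) (g : G) : g * z * g⁻¹ = z := by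
  rw [Subgroup.mem_center_iff.mp hz g, mul_assoc, mul_inv_cancel, mul_one]

private lemma c2_comm_pow (hc : ∀ a b : G, ⁅a, b⁆ ∈ Subgroup.center G) (y x : G) :
    ∀ n : ℕ, ⁅y, x⁆ ^ n = ⁅y ^ n, x⁆ := by
  intro n
  induction n with
  | zero => simp [commutatorElement_def]
  | succ n ih =>
    rw [pow_succ, pow_succ, comm_aux1, cent_conj (hc _ _), ih]
    exact Subgroup.mem_center_iff.mp (hc _ _) _

private lemma c2_pow_comm (hc : ∀ a b : G, ⁅a, b⁆ ∈ Subgroup.center G) (x y : G) :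
    ∀ n : ℕ, y ^ n * x = ⁅y, x⁆ ^ n * (x * y ^ n) := by
  intro n
  induction n with
  | zero => simp
  | succ n ih =>
    have h1 : y * x = ⁅y, x⁆ * (x * y) := by
      simp only [commutatorElement_def]; group
    calc y ^ (n+1) * x = y ^ n * (y * x) := by rw [pow_succ]; group
    _ = y ^ n * (⁅y, x⁆ * (x * y)) := by rw [h1]
    _ = ⁅y, x⁆ * (y ^ n * x * y) := by
        have := Subgroup.mem_center_iff.mp (hc y x) (y ^ n)
        rw [← mul_assoc, this]; group
    _ = ⁅y, x⁆ * (⁅y, x⁆ ^ n * (x * y ^ n) * y) := by rw [ih]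
    _ = ⁅y, x⁆ ^ (n+1) * (x * y ^ (n+1)) := by rw [pow_succ' ⁅y, x⁆ n, pow_succ y n]; group

private lemma c2_mul_pow (hc : ∀ a b : G, ⁅a, b⁆ ∈ Subgroup.center G) (x y : G) :
    ∀ n : ℕ, (x * y) ^ n = ⁅y, x⁆ ^ (n.choose 2) * (x ^ n * y ^ n) := by
  intro n
  induction n with
  | zero => simp
  | succ n ih =>
    have hch : (n+1).choose 2 = n.choose 2 + n := by
      rw [Nat.choose_succ_succ, Nat.choose_one_right, Nat.add_comm]
    rw [pow_succ, ih, hch, pow_add]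
    have h2 : y ^ n * x = ⁅y, x⁆ ^ n * (x * y ^ n) := c2_pow_comm hc x y n
    have hcent : ∀ m : ℕ, ∀ g : G, g * ⁅y, x⁆ ^ m = ⁅y, x⁆ ^ m * g := by
      intro m g
      exact Subgroup.mem_center_iff.mp (Subgroup.pow_mem _ (hc y x) m) g
    calc ⁅y,x⁆ ^ n.choose 2 * (x ^ n * y ^ n) * (x * y)
        = ⁅y,x⁆ ^ n.choose 2 * (x ^ n * (y ^ n * x) * y) := by group
      _ = ⁅y,x⁆ ^ n.choose 2 * (x ^ n * (⁅y, x⁆ ^ n * (x * y ^ n)) * y) := by rw [h2]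
      _ = ⁅y,x⁆ ^ n.choose 2 * (⁅y, x⁆ ^ n * (x ^ n * (x * y ^ n) * y)) := by
          rw [← mul_assoc (x ^ n), hcent n (x ^ n)]; group
      _ = ⁅y,x⁆ ^ n.choose 2 * ⁅y,x⁆ ^ n * (x ^ (n+1) * y ^ (n+1)) := by
          rw [pow_succ, pow_succ]; group

end Comm

universe u

private lemma class2_fix (p : ℕ) (hp : p.Prime) (hodd : Odd p) :
    ∀ (M : ℕ) (Q : Type u) (_ : Group Q) (_ : Finite Q), Nat.card Q ≤ M → IsPGroup p Q →
      (∀ a b : Q, ⁅a, b⁆ ∈ Subgroup.center Q) → ∀ β : MulAut Q, (orderOf β).Coprime p →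
      (∀ x : Q, x ^ p = 1 → β x = x) → β = 1 := by
  intro M
  induction M with
  | zero =>
    intro Q _ _ hcard
    exact absurd hcard (by have := Nat.card_pos (α := Q); omega)
  | succ M IH =>
    intro Q _ _ hcard hpg hc β hcop hfix
    by_cases hQ : Subsingleton Q
    · exact MulEquiv.ext fun x => Subsingleton.elim _ _
    · have hnt : Nontrivial Q := not_subsingleton_iff_nontrivial.mp hQ
      -- the subgroup of elements of order dividing p
      set Om : Subgroup Q :=
        { carrier := {x : Q | x ^ p = 1}
          one_mem' := one_pow p
          mul_mem' := by
            intro a b ha hb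
            show (a * b) ^ p = 1
            have h1 : (a * b) ^ p = ⁅b, a⁆ ^ (p.choose 2) * (a ^ p * b ^ p) :=
              c2_mul_pow hc a b p
            have h2 : ⁅b, a⁆ ^ p = 1 := by
              rw [c2_comm_pow hc b a p, hb]
              simp [commutatorElement_def]
            have h3 : p.choose 2 = p * ((p - 1) / 2) := by
              rw [Nat.choose_two_right, Nat.mul_div_assoc p ?_]
              obtain ⟨k, hk⟩ := hodd
              omega
            rw [h1, h3, pow_mul, h2, one_pow, ha, hb] at *
            simp
          inv_mem' := by
            intro a ha
            show a⁻¹ ^ p = 1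
            rw [inv_pow, ha, inv_one] } with hOmdef
      have hmemOm : ∀ x : Q, x ∈ Om ↔ x ^ p = 1 := fun x => Iff.rfl
      have hOmN : Om.Normal := by
        constructor
        intro a ha g
        rw [hmemOm] at *
        rw [conj_pow, ha, mul_one, mul_inv_cancel]
      -- Om is nontrivial
      have hOmne : ∃ g : Q, g ∈ Om ∧ g ≠ 1 := by
        haveI : Fintype Q := Fintype.ofFinite Q
        haveI : Fact p.Prime := ⟨hp⟩
        have hdvd : p ∣ Fintype.card Q := by
          obtain ⟨n, hn⟩ := IsPGroup.iff_card.mp hpg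
          rw [← Nat.card_eq_fintype_card, hn]
          refine dvd_pow_self p ?_
          rintro rfl
          rw [pow_zero] at hn
          exact (Finite.one_lt_card (α := Q)).ne' hn
        obtain ⟨g, hg⟩ := exists_prime_orderOf_dvd_card p hdvd
        refine ⟨g, ?_, ?_⟩
        · show g ^ p = 1
          rw [← hg, pow_orderOf_eq_one]
        · intro h
          rw [h, orderOf_one] at hg
          exact hp.one_lt.ne hg
      -- β preserves Om
      have hmap : Om.map β.toMonoidHom = Om := by
        apply le_antisymm
        · rintro - ⟨x, hx, rfl⟩
          have hx' : x ^ p = 1 := hx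
          show β x ^ p = 1
          rw [← map_pow, hx', map_one]
        · intro x hx
          have hx' : x ^ p = 1 := hx
          refine ⟨β⁻¹ x, ?_, ?_⟩
          · show (β⁻¹ x) ^ p = 1
            have h5 : β ((β⁻¹ x) ^ p) = β 1 := by
              rw [map_pow, map_one]
              show (β (β⁻¹ x)) ^ p = 1
              rw [β.apply_inv_self, hx']
            exact β.injective h5
          · exact MulAut.apply_inv_self Q β x
      -- induced automorphism on the quotient
      set βb : MulAut (Q ⧸ Om) := QuotientGroup.congr Om Om β hmap with hβbdef
      have hβbmk : ∀ x : Q, βb ((x : Q) : Q ⧸ Om) = ((β x : Q) : Q ⧸ Om) := fun x => rfl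
      have hβbpow : ∀ (k : ℕ) (x : Q), (βb ^ k) ((x : Q) : Q ⧸ Om) = (((β ^ k) x : Q) : Q ⧸ Om) := by
        intro k
        induction k with
        | zero => intro x; simp
        | succ k ih =>
          intro x
          rw [pow_succ', pow_succ', MulAut.mul_apply, MulAut.mul_apply, ih x, hβbmk]
      have hβbord : (orderOf βb).Coprime p := by
        refine Nat.Coprime.coprime_dvd_left ?_ hcop
        apply orderOf_dvd_of_pow_eq_one
        apply MulEquiv.ext
        intro q
        induction q using QuotientGroup.induction_on with
        | H x => rw [hβbpow (orderOf β) x, pow_orderOf_eq_one β]; rfl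
      obtain ⟨g0, hg0, hg0ne⟩ := hOmne
      have hcardOm : 1 < Nat.card Om := by
        have : Nontrivial Om := ⟨⟨⟨g0, hg0⟩, 1, by simp [Subtype.ext_iff]; exact hg0ne⟩⟩
        exact Finite.one_lt_card
      have hcardQt : Nat.card (Q ⧸ Om) ≤ M := by
        have h6 := Subgroup.card_eq_card_quotient_mul_card_subgroup Om
        have h7 : 0 < Nat.card (Q ⧸ Om) := Nat.card_pos
        have h8 : Nat.card (Q ⧸ Om) < Nat.card Q := by
          rw [h6]
          exact lt_mul_of_one_lt_right h7 hcardOm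
        omega
      have hcq : ∀ a b : Q ⧸ Om, ⁅a, b⁆ ∈ Subgroup.center (Q ⧸ Om) := by
        intro a b
        induction a using QuotientGroup.induction_on with | H x => ?_
        induction b using QuotientGroup.induction_on with | H y => ?_
        rw [Subgroup.mem_center_iff]
        intro g
        induction g using QuotientGroup.induction_on with | H z => ?_
        have hcxy : (⁅((x : Q) : Q ⧸ Om), ((y : Q) : Q ⧸ Om)⁆) = ((⁅x, y⁆ : Q) : Q ⧸ Om) := by
          simp [commutatorElement_def]
        rw [hcxy, ← QuotientGroup.mk_mul, ← QuotientGroup.mk_mul,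
          Subgroup.mem_center_iff.mp (hc x y) z]
      have hchoose : p.choose 2 = p * ((p - 1) / 2) := by
        rw [Nat.choose_two_right, Nat.mul_div_assoc p ?_]
        obtain ⟨k, hk⟩ := hodd
        omega
      have hfixq : ∀ q : Q ⧸ Om, q ^ p = 1 → βb q = q := by
        intro q hq
        induction q using QuotientGroup.induction_on with | H x => ?_
        have hxp : x ^ p ∈ Om := by
          rw [← QuotientGroup.eq_one_iff]
          rw [show (((x ^ p : Q)) : Q ⧸ Om) = ((x : Q) : Q ⧸ Om) ^ p by simp]
          exact hq
        set c := x⁻¹ * β x with hcdef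
        have hβx : β x = x * c := by rw [hcdef]; group
        have hfixxp : β (x ^ p) = x ^ p := hfix _ hxp
        have h8 : (x * c) ^ p = x ^ p := by rw [← hβx, ← map_pow]; exact hfixxp
        have h9 : (x * c) ^ p = ⁅c, x⁆ ^ (p.choose 2) * (x ^ p * c ^ p) := c2_mul_pow hc x c p
        set u := ⁅c, x⁆ with hudef
        have hu : u ∈ Subgroup.center Q := hc c x
        have h10 : u ^ (p.choose 2) * (x ^ p * c ^ p) = x ^ p := by rw [← h9, h8]
        have h11 : c ^ p = (u ^ (p.choose 2))⁻¹ := by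
          have hcen := Subgroup.mem_center_iff.mp (Subgroup.pow_mem _ hu (p.choose 2)) (x ^ p)
          have h12 : x ^ p * (u ^ (p.choose 2) * c ^ p) = x ^ p * 1 := by
            rw [mul_one, ← mul_assoc, hcen, mul_assoc, h10]
          have h13 := mul_left_cancel h12
          have h13' : c ^ p * u ^ p.choose 2 = 1 := by
            rw [Subgroup.mem_center_iff.mp (Subgroup.pow_mem _ hu _) (c ^ p)]
            exact h13
          exact eq_inv_of_mul_eq_one_left h13'
        have hcpc : c ^ p ∈ Subgroup.center Q := by
          rw [h11]
          exact Subgroup.inv_mem _ (Subgroup.pow_mem _ hu _)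
        have hup : u ^ p = 1 := by
          rw [hudef, c2_comm_pow hc c x p, commutatorElement_def,
            ← Subgroup.mem_center_iff.mp hcpc x]
          group
        have hcp1 : c ^ p = 1 := by rw [h11, hchoose, pow_mul, hup, one_pow, inv_one]
        show βb ((x : Q) : Q ⧸ Om) = ((x : Q) : Q ⧸ Om)
        rw [hβbmk x, hβx]
        have hcq1 : ((c : Q) : Q ⧸ Om) = 1 := QuotientGroup.eq_one_iff c |>.mpr hcp1
        rw [QuotientGroup.mk_mul, hcq1, mul_one]
      have hβb1 : βb = 1 :=
        IH (Q ⧸ Om) inferInstance inferInstance hcardQt (hpg.to_quotient Om) hcq βb hβbord hfixq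
      apply MulEquiv.ext
      intro x
      set c := x⁻¹ * β x with hcdef
      have hcOm : c ∈ Om := by
        have h13 : ((β x : Q) : Q ⧸ Om) = ((x : Q) : Q ⧸ Om) := by
          rw [← hβbmk x, hβb1]; rfl
        exact QuotientGroup.eq.mp h13.symm
      have hc1 : c ^ p = 1 := hcOm
      have hβc : β c = c := hfix c hc1
      have hβx : β x = x * c := by rw [hcdef]; group
      have hk : ∀ k : ℕ, (β ^ k) x = x * c ^ k := by
        intro k
        induction k with
        | zero => simp
        | succ k ih =>
          rw [pow_succ', MulAut.mul_apply, ih, map_mul, map_pow, hβc, hβx, pow_succ]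
          group
      have h14 : x * c ^ (orderOf β) = x := by rw [← hk, pow_orderOf_eq_one]; rfl
      have h15 : c ^ (orderOf β) = 1 := mul_left_cancel (by rw [h14, mul_one])
      have h16 : orderOf c ∣ Nat.gcd (orderOf β) p :=
        Nat.dvd_gcd (orderOf_dvd_of_pow_eq_one h15) (orderOf_dvd_of_pow_eq_one hc1)
      have h17 : orderOf c ∣ 1 := hcop ▸ h16
      have hceq : c = 1 := orderOf_eq_one_iff.mp (Nat.dvd_one.mp h17)
      show β x = x
      rw [hβx, hceq, mul_one]

private lemma normal_meets_center {G : Type u} [Group G] [Finite G] {p : ℕ} (hp : p.Prime)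
    (hpg : IsPGroup p G) (N : Subgroup G) [N.Normal] (hN : N ≠ ⊥) :
    ∃ g : G, g ∈ N ∧ g ∈ Subgroup.center G ∧ g ≠ 1 := by
  haveI : Fact p.Prime := ⟨hp⟩
  have hpg' : IsPGroup p (ConjAct G) := hpg.of_equiv ConjAct.toConjAct
  have hNnt : Nontrivial N := by
    rcases N.bot_or_nontrivial with h | h
    · exact absurd h hN
    · exact h
  have hdvd : p ∣ Nat.card N := by
    obtain ⟨n, hn⟩ := IsPGroup.iff_card.mp (hpg.to_subgroup N)
    have h1 : 1 < Nat.card N := Finite.one_lt_card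
    rw [hn]
    refine dvd_pow_self p ?_
    rintro rfl
    rw [pow_zero] at hn
    omega
  have h1fix : (1 : N) ∈ MulAction.fixedPoints (ConjAct G) N := by
    intro g
    apply Subtype.ext
    rw [ConjAct.Subgroup.val_conj_smul]
    simp
  obtain ⟨b, hbfix, hbne⟩ :=
    hpg'.exists_fixed_point_of_prime_dvd_card_of_fixed_point (N : Subgroup G) hdvd h1fix
  refine ⟨(b : G), b.2, ?_, ?_⟩
  · rw [Subgroup.mem_center_iff]
    intro g
    have := hbfix (ConjAct.toConjAct g)
    have hval : g * (b : G) * g⁻¹ = (b : G) := by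
      have h2 := congrArg (Subtype.val) this
      rw [ConjAct.Subgroup.val_conj_smul, ConjAct.smul_def,
        ConjAct.ofConjAct_toConjAct] at h2
      exact h2
    calc g * (b : G) = (g * b * g⁻¹) * g := by group
    _ = (b : G) * g := by rw [hval]
  · intro h
    exact hbne (Subtype.ext (by simp [h]))

private def IsChar {P : Type u} [Group P] (K : Subgroup P) : Prop :=
  ∀ φ : MulAut P, K.map φ.toMonoidHom = K

private lemma isChar_mem {P : Type u} [Group P] {K : Subgroup P} (h : IsChar K)
    (φ : MulAut P) {x : P} (hx : x ∈ K) : φ x ∈ K := by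
  rw [← h φ]; exact ⟨x, hx, rfl⟩

private lemma isChar_normal {P : Type u} [Group P] {K : Subgroup P} (h : IsChar K) :
    K.Normal := by
  constructor
  intro x hx g
  exact isChar_mem h (MulAut.conj g) hx

set_option maxHeartbeats 1000000 in
private lemma exists_critical {P : Type u} [Group P] [Finite P] {p : ℕ} (hp : p.Prime)
    (hpg : IsPGroup p P) :
    ∃ C : Subgroup P, IsChar C ∧ Subgroup.centralizer (C : Set P) ≤ C ∧
      (∀ x : P, ∀ c ∈ C, ⁅x, c⁆ ∈ C ⊓ Subgroup.centralizer (C : Set P)) := by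
  classical
  set Pred : Subgroup P → Prop := fun C =>
    IsChar C ∧ ∀ x : P, ∀ c ∈ C, ⁅x, c⁆ ∈ C ⊓ Subgroup.centralizer (C : Set P) with hPreddef
  have hbot : Pred ⊥ := by
    constructor
    · intro φ
      exact Subgroup.map_bot φ.toMonoidHom
    · intro x c hc
      rw [Subgroup.mem_bot] at hc
      subst hc
      have h1 : ⁅x, (1 : P)⁆ = 1 := by simp [commutatorElement_def]
      rw [h1]
      exact Subgroup.one_mem _
  haveI : Nonempty {C : Subgroup P // Pred C} := ⟨⟨⊥, hbot⟩⟩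
  obtain ⟨⟨C, hC⟩, hmax⟩ :=
    Finite.exists_max fun C : {C : Subgroup P // Pred C} => Nat.card (C : Subgroup P)
  refine ⟨C, hC.1, ?_, hC.2⟩
  by_contra hcent
  obtain ⟨h0, hh0H, hh0C⟩ := SetLike.not_le_iff_exists.mp hcent
  set H : Subgroup P := Subgroup.centralizer (C : Set P) with hHdef
  set Zc : Subgroup P := C ⊓ H with hZdef
  have hHle : ∀ ψ : MulAut P, H.map ψ.toMonoidHom ≤ H := by
    rintro ψ - ⟨h, hh, rfl⟩
    rw [Subgroup.mem_centralizer_iff]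
    intro c hcC
    rw [← hC.1 ψ] at hcC
    obtain ⟨c', hc', rfl⟩ := hcC
    show ψ c' * ψ h = ψ h * ψ c'
    rw [← map_mul, ← map_mul, Subgroup.mem_centralizer_iff.mp hh c' hc']
  have hHchar : IsChar H := by
    intro φ
    apply le_antisymm (hHle φ)
    intro x hx
    exact ⟨φ⁻¹ x, hHle φ⁻¹ ⟨x, hx, rfl⟩, MulAut.apply_inv_self P φ x⟩
  have hZchar : IsChar Zc := by
    intro φ
    apply le_antisymm
    · rintro - ⟨z, hz, rfl⟩
      obtain ⟨hz1, hz2⟩ := Subgroup.mem_inf.mp hz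
      exact Subgroup.mem_inf.mpr ⟨isChar_mem hC.1 φ hz1, isChar_mem hHchar φ hz2⟩
    · intro x hx
      obtain ⟨hx1, hx2⟩ := Subgroup.mem_inf.mp hx
      exact ⟨φ⁻¹ x, Subgroup.mem_inf.mpr ⟨isChar_mem hC.1 φ⁻¹ hx1, isChar_mem hHchar φ⁻¹ hx2⟩,
        MulAut.apply_inv_self P φ x⟩
  haveI hZN : Zc.Normal := isChar_normal hZchar
  haveI hHN : H.Normal := isChar_normal hHchar
  haveI hCN : C.Normal := isChar_normal hC.1
  set π := QuotientGroup.mk' Zc with hπdef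
  have hπsurj : Function.Surjective π := QuotientGroup.mk'_surjective Zc
  haveI : (H.map π).Normal := hHN.map π hπsurj
  have hmapne : H.map π ≠ ⊥ := by
    intro hbot2
    have h2 : π h0 ∈ H.map π := ⟨h0, hh0H, rfl⟩
    rw [hbot2, Subgroup.mem_bot] at h2
    have h0Z : h0 ∈ Zc := by
      rw [← QuotientGroup.ker_mk' Zc]
      exact h2
    exact hh0C (Subgroup.mem_inf.mp h0Z).1
  obtain ⟨gb, hgbH, hgbZ, hgbne⟩ :=
    normal_meets_center hp (hpg.to_quotient Zc) (H.map π) hmapne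
  obtain ⟨h1, hh1H, hπh1⟩ := Subgroup.mem_map.mp hgbH
  set D : Subgroup P :=
    { carrier := {x : P | x ∈ H ∧ ∀ y : P, ⁅x, y⁆ ∈ Zc}
      one_mem' := by
        refine ⟨H.one_mem, ?_⟩
        intro y
        have h1 : ⁅(1 : P), y⁆ = 1 := by simp [commutatorElement_def]
        rw [h1]
        exact Zc.one_mem
      mul_mem' := by
        rintro a b ⟨haH, ha⟩ ⟨hbH, hb⟩
        refine ⟨H.mul_mem haH hbH, ?_⟩
        intro y
        rw [comm_aux1]
        exact Zc.mul_mem (hZN.conj_mem _ (hb y) a) (ha y)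
      inv_mem' := by
        rintro a ⟨haH, ha⟩
        refine ⟨H.inv_mem haH, ?_⟩
        intro y
        rw [comm_inv]
        simpa using hZN.conj_mem _ (Zc.inv_mem (ha y)) a⁻¹ } with hDdef
  have hDchar : IsChar D := by
    have hDle : ∀ ψ : MulAut P, D.map ψ.toMonoidHom ≤ D := by
      rintro ψ - ⟨d, hd, rfl⟩
      obtain ⟨hdH, hdc⟩ := hd
      refine ⟨?_, ?_⟩
      · rw [← hHchar ψ]
        exact ⟨d, hdH, rfl⟩
      · intro y
        have h2 : ⁅ψ d, y⁆ = ψ ⁅d, ψ⁻¹ y⁆ := by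
          rw [map_commutatorElement, MulAut.apply_inv_self]
        show ⁅ψ d, y⁆ ∈ Zc
        rw [h2, ← hZchar ψ]
        exact ⟨_, hdc (ψ⁻¹ y), rfl⟩
    intro φ
    apply le_antisymm (hDle φ)
    intro x hx
    exact ⟨φ⁻¹ x, hDle φ⁻¹ ⟨x, hx, rfl⟩, MulAut.apply_inv_self P φ x⟩
  have hh1D : h1 ∈ D := by
    refine ⟨hh1H, ?_⟩
    intro y
    have hcen : π ⁅h1, y⁆ = 1 := by
      rw [map_commutatorElement, hπh1]
      exact commutatorElement_eq_one_iff_mul_comm.mpr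
        (Subgroup.mem_center_iff.mp hgbZ (π y)).symm
    show ⁅h1, y⁆ ∈ Zc
    rw [← QuotientGroup.ker_mk' Zc]
    exact hcen
  have hh1C : h1 ∉ C := by
    intro hin
    have h3 : h1 ∈ Zc := Subgroup.mem_inf.mpr ⟨hin, hh1H⟩
    apply hgbne
    rw [← hπh1]
    have h4 : h1 ∈ (QuotientGroup.mk' Zc).ker := by
      rw [QuotientGroup.ker_mk' Zc]
      exact h3
    exact h4
  set E := C ⊔ D with hEdef
  have hZcE : Zc ≤ Subgroup.centralizer (E : Set P) := by
    intro z hz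
    obtain ⟨hz1, hz2⟩ := Subgroup.mem_inf.mp hz
    rw [Subgroup.mem_centralizer_iff]
    intro w hw
    rw [hEdef] at hw
    rw [show ((C ⊔ D : Subgroup P) : Set P) = (C : Set P) * (D : Set P) from
      Subgroup.normal_mul C D] at hw
    obtain ⟨c, hc, d, hd, rfl⟩ := hw
    have hd' : d ∈ D := hd
    obtain ⟨hdH, hdc⟩ := hd'
    have hc' : c ∈ C := hc
    have h3 : c * z = z * c := Subgroup.mem_centralizer_iff.mp hz2 c hc'
    have h4 : z * d = d * z := Subgroup.mem_centralizer_iff.mp hdH z hz1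
    calc c * d * z = c * (z * d) := by rw [mul_assoc, ← h4]
    _ = z * (c * d) := by rw [← mul_assoc, h3, mul_assoc]
  have hZcE' : Zc ≤ E ⊓ Subgroup.centralizer (E : Set P) :=
    le_inf (le_trans inf_le_left le_sup_left) hZcE
  have hPredE : Pred E := by
    constructor
    · intro φ
      rw [hEdef, Subgroup.map_sup, hC.1 φ, hDchar φ]
    · intro x e he
      have he' : e ∈ (C : Set P) * (D : Set P) := by
        rw [← Subgroup.normal_mul]
        exact he
      obtain ⟨c, hc, d, hd, rfl⟩ := he'
      have hc' : c ∈ C := hc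
      have hd' : d ∈ D := hd
      obtain ⟨hdH, hdc⟩ := hd'
      rw [comm_aux2]
      apply Subgroup.mul_mem
      · exact hZcE' (hC.2 x c hc')
      · have h5 : ⁅x, d⁆ ∈ Zc := by
          rw [show ⁅x, d⁆ = ⁅d, x⁆⁻¹ from (commutatorElement_inv d x).symm]
          exact Zc.inv_mem (hdc x)
        exact hZcE' (hZN.conj_mem _ h5 c)
  have hlt : Nat.card C < Nat.card E := by
    have hsub : (C : Set P) ⊂ (E : Set P) := by
      constructor
      · exact SetLike.coe_subset_coe.mpr le_sup_left
      · intro hsub2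
        have h6 : D ≤ E := le_sup_right
        have h7 : h1 ∈ (E : Set P) := h6 hh1D
        exact hh1C (hsub2 h7)
    have e1 : Nat.card C = (C : Set P).ncard :=
      (congrArg Nat.card (SetLike.coe_sort_coe (p := C)).symm).trans (Nat.card_coe_set_eq _)
    have e2 : Nat.card E = (E : Set P).ncard :=
      (congrArg Nat.card (SetLike.coe_sort_coe (p := E)).symm).trans (Nat.card_coe_set_eq _)
    rw [e1, e2]
    exact Set.ncard_lt_ncard hsub (Set.toFinite _)
  exact absurd (hmax ⟨E, hPredE⟩) (not_le.mpr hlt)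

private lemma coprime_fix_omega {P : Type u} [Group P] [Finite P] {p : ℕ} (hp : p.Prime)
    (hodd : Odd p) (hpg : IsPGroup p P) (β : MulAut P) (hcop : (orderOf β).Coprime p)
    (hfix : ∀ x : P, x ^ p = 1 → β x = x) : β = 1 := by
  obtain ⟨C, hchar, hcent, hcomm⟩ := exists_critical hp hpg
  haveI hCN : C.Normal := isChar_normal hchar
  set e : MulAut ↥C := (β.subgroupMap C).trans (MulEquiv.subgroupCongr (hchar β)) with hedef
  have he : ∀ c : ↥C, ((e c : ↥C) : P) = β (c : P) := fun c => rfl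
  have hepow : ∀ (k : ℕ) (c : ↥C), (((e ^ k) c : ↥C) : P) = (β ^ k) (c : P) := by
    intro k
    induction k with
    | zero => intro c; simp
    | succ k ih =>
      intro c
      rw [pow_succ', pow_succ', MulAut.mul_apply, MulAut.mul_apply, he ((e ^ k) c), ih c]
  have heord : (orderOf e).Coprime p := by
    refine Nat.Coprime.coprime_dvd_left ?_ hcop
    apply orderOf_dvd_of_pow_eq_one
    apply MulEquiv.ext
    intro c
    apply Subtype.ext
    rw [hepow (orderOf β) c, pow_orderOf_eq_one]
    rfl
  have hc2 : ∀ a b : ↥C, ⁅a, b⁆ ∈ Subgroup.center ↥C := by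
    intro a b
    rw [Subgroup.mem_center_iff]
    intro g
    apply Subtype.ext
    have h1 : ((⁅a, b⁆ : ↥C) : P) = ⁅(a : P), (b : P)⁆ := by
      simp [commutatorElement_def]
    have h2 := (Subgroup.mem_inf.mp (hcomm (a : P) (b : P) b.2)).2
    have h3 : (g : P) * ⁅(a : P), (b : P)⁆ = ⁅(a : P), (b : P)⁆ * (g : P) :=
      Subgroup.mem_centralizer_iff.mp h2 (g : P) g.2
    rw [Subgroup.coe_mul, Subgroup.coe_mul, h1, h3]
  have hfixe : ∀ c : ↥C, c ^ p = 1 → e c = c := by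
    intro c hcp
    apply Subtype.ext
    rw [he c]
    apply hfix
    have h := congrArg Subtype.val hcp
    simpa using h
  have he1 : e = 1 := class2_fix p hp hodd (Nat.card ↥C) ↥C inferInstance inferInstance le_rfl
    (hpg.to_subgroup C) hc2 e heord hfixe
  have hfixC : ∀ c : P, c ∈ C → β c = c := by
    intro c hc
    have h3 : e ⟨c, hc⟩ = ⟨c, hc⟩ := by rw [he1]; rfl
    have h4 := congrArg Subtype.val h3
    calc β c = ((e ⟨c, hc⟩ : ↥C) : P) := (he ⟨c, hc⟩).symm
    _ = c := h4
  have hkey : ∀ x : P, β x * x⁻¹ ∈ C := by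
    intro x
    apply hcent
    rw [Subgroup.mem_centralizer_iff]
    intro c hcC
    have h1 : x⁻¹ * c * x ∈ C := by
      have := hCN.conj_mem c hcC x⁻¹
      simpa using this
    have h2 : β (x⁻¹ * c * x) = x⁻¹ * c * x := hfixC _ h1
    rw [map_mul, map_mul, map_inv, hfixC c hcC] at h2
    calc c * (β x * x⁻¹) = β x * ((β x)⁻¹ * c * β x) * x⁻¹ := by group
    _ = β x * (x⁻¹ * c * x) * x⁻¹ := by rw [h2]
    _ = β x * x⁻¹ * c := by group
  apply MulEquiv.ext
  intro x
  set ee := β x * x⁻¹ with heedef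
  have heeC : ee ∈ C := hkey x
  have hβee : β ee = ee := hfixC ee heeC
  have hβx : β x = ee * x := by rw [heedef]; group
  have hk : ∀ k : ℕ, (β ^ k) x = ee ^ k * x := by
    intro k
    induction k with
    | zero => simp
    | succ k ih =>
      rw [pow_succ', MulAut.mul_apply, ih, map_mul, map_pow, hβee, hβx, pow_succ']
      group
  have h14 : ee ^ (orderOf β) * x = x := by rw [← hk, pow_orderOf_eq_one]; rfl
  have h15 : ee ^ (orderOf β) = 1 := mul_right_cancel (a := ee ^ orderOf β) (b := x) (c := 1) (by rw [h14, one_mul])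
  obtain ⟨j, hj⟩ := hpg ee
  have h16 : orderOf ee ∣ Nat.gcd (orderOf β) (p ^ j) :=
    Nat.dvd_gcd (orderOf_dvd_of_pow_eq_one h15) (orderOf_dvd_of_pow_eq_one hj)
  have h17 : Nat.gcd (orderOf β) (p ^ j) = 1 := Nat.Coprime.pow_right j hcop
  have hee1 : ee = 1 := orderOf_eq_one_iff.mp (Nat.dvd_one.mp (h17 ▸ h16))
  show β x = x
  rw [hβx, hee1, one_mul]

private lemma chain_fix {P : Type u} [Group P] [Finite P] {p : ℕ}
    (hpg : IsPGroup p P) (n : ℕ) (S : ℕ → Subgroup P) (hS0 : S 0 = ⊥)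
    (γ : MulAut P) (hcop : (orderOf γ).Coprime p)
    (hst : ∀ i < n, ∀ x ∈ S (i + 1), γ x * x⁻¹ ∈ S i) :
    ∀ i ≤ n, ∀ x ∈ S i, γ x = x := by
  intro i
  induction i with
  | zero =>
    intro _ x hx
    rw [hS0, Subgroup.mem_bot] at hx
    rw [hx, map_one]
  | succ i IH =>
    intro hin x hx
    have hi : i < n := Nat.lt_of_succ_le hin
    set c := γ x * x⁻¹ with hcdef
    have hcS : c ∈ S i := hst i hi x hx
    have hcfix : γ c = c := IH (Nat.le_of_lt hi) c hcS
    have hγx : γ x = c * x := by rw [hcdef]; group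
    have hk : ∀ k : ℕ, (γ ^ k) x = c ^ k * x := by
      intro k
      induction k with
      | zero => simp
      | succ k ih =>
        rw [pow_succ', MulAut.mul_apply, ih, map_mul, map_pow, hcfix, hγx, pow_succ']
        group
    have h14 : c ^ (orderOf γ) * x = x := by rw [← hk, pow_orderOf_eq_one]; rfl
    have h15 : c ^ (orderOf γ) = 1 :=
      mul_right_cancel (a := c ^ orderOf γ) (b := x) (c := 1) (by rw [h14, one_mul])
    obtain ⟨j, hj⟩ := hpg c
    have h16 : orderOf c ∣ Nat.gcd (orderOf γ) (p ^ j) :=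
      Nat.dvd_gcd (orderOf_dvd_of_pow_eq_one h15) (orderOf_dvd_of_pow_eq_one hj)
    have h17 : Nat.gcd (orderOf γ) (p ^ j) = 1 := Nat.Coprime.pow_right j hcop
    have hc1 : c = 1 := orderOf_eq_one_iff.mp (Nat.dvd_one.mp (h17 ▸ h16))
    rw [hγx, hc1, one_mul]

theorem stmt_12 {P : Type*} [Group P] [Finite P] (p : ℕ) (hp : p.Prime)
    (hodd : Odd p) (hpgrp : IsPGroup p P)
    (A : Subgroup (MulAut P)) (n : ℕ) (S : ℕ → Subgroup P)
    (hS0 : S 0 = ⊥) (hSn : S n = Subgroup.closure {x : P | x ^ p = 1})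
    (hmono : ∀ i < n, S i ≤ S (i + 1))
    (hinv : ∀ i ≤ n, ∀ α ∈ A, (S i).map (α : MulAut P).toMonoidHom = S i)
    (B : Subgroup (MulAut P)) (hBA : B ≤ A)
    (hB : ∀ i < n, ∀ β ∈ B, ∀ x ∈ S (i + 1), (β : MulAut P) x * x⁻¹ ∈ S i) :
    ∃ N : Subgroup A, N.Normal ∧ IsPGroup p N ∧ B.subgroupOf A ≤ N := by
  classical
  set N' : Subgroup (MulAut P) :=
    { carrier := {α : MulAut P | α ∈ A ∧ ∀ i < n, ∀ x ∈ S (i + 1), α x * x⁻¹ ∈ S i}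
      one_mem' := by
        refine ⟨A.one_mem, ?_⟩
        intro i hi x hx
        have h1 : (1 : MulAut P) x * x⁻¹ = 1 := by simp
        rw [h1]
        exact (S i).one_mem
      mul_mem' := by
        rintro α α' ⟨hαA, hα⟩ ⟨hα'A, hα'⟩
        refine ⟨A.mul_mem hαA hα'A, ?_⟩
        intro i hi x hx
        have hx' : α' x ∈ S (i + 1) := by
          rw [← hinv (i + 1) (Nat.succ_le_of_lt hi) α' hα'A]
          exact ⟨x, hx, rfl⟩
        have h1 : α (α' x) * (α' x)⁻¹ ∈ S i := hα i hi _ hx'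
        have h2 : α' x * x⁻¹ ∈ S i := hα' i hi x hx
        have h3 : (α * α') x * x⁻¹ = (α (α' x) * (α' x)⁻¹) * (α' x * x⁻¹) := by
          rw [MulAut.mul_apply]
          group
        rw [h3]
        exact (S i).mul_mem h1 h2
      inv_mem' := by
        rintro α ⟨hαA, hα⟩
        refine ⟨A.inv_mem hαA, ?_⟩
        intro i hi x hx
        have hy : α⁻¹ x ∈ S (i + 1) := by
          rw [← hinv (i + 1) (Nat.succ_le_of_lt hi) α⁻¹ (A.inv_mem hαA)]
          exact ⟨x, hx, rfl⟩
        have h1 : α (α⁻¹ x) * (α⁻¹ x)⁻¹ ∈ S i := hα i hi _ hy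
        have h2 : α (α⁻¹ x) = x := MulAut.apply_inv_self P α x
        rw [h2] at h1
        have h3 : α⁻¹ x * x⁻¹ = (x * (α⁻¹ x)⁻¹)⁻¹ := by group
        rw [h3]
        exact (S i).inv_mem h1 } with hN'def
  have hN'le : N' ≤ A := fun α hα => hα.1
  refine ⟨N'.subgroupOf A, ?_, ?_, ?_⟩
  · constructor
    intro na hna g
    rw [Subgroup.mem_subgroupOf] at hna ⊢
    obtain ⟨-, hch⟩ := hna
    refine ⟨SetLike.coe_mem _, ?_⟩
    intro i hi x hx
    set y := ((g⁻¹ : ↥A) : MulAut P) x with hydef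
    have hyS : y ∈ S (i + 1) := by
      rw [← hinv (i + 1) (Nat.succ_le_of_lt hi) _ (SetLike.coe_mem g⁻¹)]
      exact ⟨x, hx, rfl⟩
    have h1 : (na : MulAut P) y * y⁻¹ ∈ S i := hch i hi y hyS
    have h2 : ((g : ↥A) : MulAut P) ((na : MulAut P) y * y⁻¹) ∈ S i := by
      rw [← hinv i (Nat.le_of_lt hi) _ (SetLike.coe_mem g)]
      exact ⟨_, h1, rfl⟩
    have hgy : ((g : ↥A) : MulAut P) y = x := by
      rw [hydef]
      rw [show ((g⁻¹ : ↥A) : MulAut P) = (((g : ↥A) : MulAut P))⁻¹ from rfl]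
      exact MulAut.apply_inv_self P _ x
    have h3 : ((g * na * g⁻¹ : ↥A) : MulAut P) x * x⁻¹
        = ((g : ↥A) : MulAut P) ((na : MulAut P) y * y⁻¹) := by
      rw [map_mul, map_inv, hgy]
      have h4 : ((g * na * g⁻¹ : ↥A) : MulAut P) x
          = ((g : ↥A) : MulAut P) ((na : MulAut P) y) := by
        rw [hydef]
        rw [show ((g * na * g⁻¹ : ↥A) : MulAut P)
          = ((g : ↥A) : MulAut P) * ((na : ↥A) : MulAut P) * (((g : ↥A) : MulAut P))⁻¹ from rfl]
        rw [MulAut.mul_apply, MulAut.mul_apply]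
        rfl
      rw [h4]
    rw [h3]
    exact h2
  · have hpgN' : IsPGroup p N' := by
      intro gg
      set α := (gg : MulAut P) with hαdef
      have hggN' : α ∈ N' := gg.2
      set k := (orderOf α).factorization p with hkdef
      refine ⟨k, ?_⟩
      have hMne : orderOf α ≠ 0 := (orderOf_pos α).ne'
      set γ := α ^ (p ^ k) with hγdef
      have hγN' : γ ∈ N' := N'.pow_mem hggN' _
      have hgcd : Nat.gcd (orderOf α) (p ^ k) = p ^ k :=
        Nat.gcd_eq_right (Nat.ordProj_dvd _ _)
      have hord : orderOf γ = orderOf α / p ^ k := by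
        rw [hγdef, orderOf_pow, hgcd]
      have hcop : (orderOf γ).Coprime p := by
        rw [hord]
        exact (Nat.coprime_ordCompl hp hMne).symm
      have hfixSn : ∀ x ∈ S n, γ x = x :=
        chain_fix hpgrp n S hS0 γ hcop (fun i hi x hx => hγN'.2 i hi x hx) n le_rfl
      have hfixp : ∀ x : P, x ^ p = 1 → γ x = x := by
        intro x hx
        exact hfixSn x (hSn ▸ Subgroup.subset_closure hx)
      have hγ1 : γ = 1 := coprime_fix_omega hp hodd hpgrp γ hcop hfixp
      apply Subtype.ext
      rw [SubmonoidClass.coe_pow]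
      exact hγ1
    have hequiv : ↥(N'.subgroupOf A) ≃* ↥N' := Subgroup.subgroupOfEquivOfLe hN'le
    exact hpgN'.of_equiv hequiv.symm
  · intro b hb
    rw [Subgroup.mem_subgroupOf] at hb ⊢
    exact ⟨hBA hb, fun i hi x hx => hB i hi _ hb x hx⟩
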